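/- Let λ < 0, C > 0 and e₀ > 0 be real numbers. Define G = √3·e₀·|λ|/C and α = 1 + |λ|·G/4 − √(1 + (λ·G/4)²), and suppose |λ|·G/4 < 1. Define δ(t) = ( e₀²·e^{λt} + (C²/λ²)·( t² + 2t/λ + (2/λ²)·(1 − e^{λt}) ) )^{1/2}. Then for every τ ≤ G·(1 − α) and every t ∈ [0, τ]: δ(t) ≤ e₀. -/

import Mathlib

set_option maxHeartbeats 1000000


open Set

private lemma mono_aux {f f' : ℝ → ℝ} (hf : ∀ x, HasDerivAt f (f' x) x)
    (h' : ∀ x, 0 ≤ x → 0 ≤ f' x) : ∀ u, 0 ≤ u → f 0 ≤ f u := by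
  intro u hu
  have hmono : MonotoneOn f (Ici 0) := by
    apply monotoneOn_of_deriv_nonneg (convex_Ici 0)
    · exact fun x _ => ((hf x).differentiableAt.continuousAt).continuousWithinAt
    · exact fun x _ => ((hf x).differentiableAt).differentiableWithinAt
    · intro x hx
      rw [(hf x).deriv]
      exact h' x (le_of_lt (by simpa using hx))
  exact hmono (mem_Ici.mpr le_rfl) hu hu

private lemma exp_neg_le_quad (u : ℝ) (hu : 0 ≤ u) :
    Real.exp (-u) ≤ 1 - u + u ^ 2 / 2 := by
  have key := mono_aux (f := fun x => 1 - x + x ^ 2 / 2 - Real.exp (-x))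
    (f' := fun x => -1 + x + Real.exp (-x)) ?_ ?_ u hu
  · simpa using key
  · intro x
    have h1 : HasDerivAt (fun x : ℝ => Real.exp (-x)) (-Real.exp (-x)) x := by
      exact ((Real.hasDerivAt_exp (-x)).comp x (hasDerivAt_neg x)).congr_deriv (by ring)
    have h2 : HasDerivAt (fun x : ℝ => 1 - x + x ^ 2 / 2) (-1 + x) x := by
      have := ((hasDerivAt_pow 2 x).div_const 2)
      have h3 := ((hasDerivAt_id x).const_sub 1).add this
      refine h3.congr_deriv ?_
      ring
    refine (h2.sub h1).congr_deriv ?_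
    ring
  · intro x hx
    have h := Real.add_one_le_exp (-x)
    show 0 ≤ -1 + x + Real.exp (-x)
    linarith

private lemma exp_neg_ge_cubic (u : ℝ) (hu : 0 ≤ u) :
    1 - u + u ^ 2 / 2 - u ^ 3 / 6 ≤ Real.exp (-u) := by
  have key := mono_aux (f := fun x => Real.exp (-x) - (1 - x + x ^ 2 / 2 - x ^ 3 / 6))
    (f' := fun x => (1 - x + x ^ 2 / 2) - Real.exp (-x)) ?_ ?_ u hu
  · simpa using key
  · intro x
    have h1 : HasDerivAt (fun x : ℝ => Real.exp (-x)) (-Real.exp (-x)) x := by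
      exact ((Real.hasDerivAt_exp (-x)).comp x (hasDerivAt_neg x)).congr_deriv (by ring)
    have h2 : HasDerivAt (fun x : ℝ => 1 - x + x ^ 2 / 2 - x ^ 3 / 6)
        (-1 + x - x ^ 2 / 2) x := by
      have ha := ((hasDerivAt_pow 2 x).div_const 2)
      have hb := ((hasDerivAt_pow 3 x).div_const 6)
      have h3 := (((hasDerivAt_id x).const_sub 1).add ha).sub hb
      refine h3.congr_deriv ?_
      ring
    refine (h1.sub h2).congr_deriv ?_
    ring
  · intro x hx
    have := exp_neg_le_quad x hx
    linarith

/-- Lemma 1: for `λ < 0`, `C > 0`, `e₀ > 0`, with `G = √3·e₀·|λ|/C`,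
`α = 1 + |λ|G/4 − √(1 + (λG/4)²)` and `|λ|G/4 < 1`, the Euler error bound
`δ(t) = (e₀²·e^{λt} + (C²/λ²)(t² + 2t/λ + (2/λ²)(1 − e^{λt})))^{1/2}` stays
below `e₀` on `[0, τ]` whenever `τ ≤ G·(1 − α)`. -/
theorem euler_error_contracting (lam C e₀ : ℝ) (hlam : lam < 0) (hC : 0 < C)
    (he₀ : 0 < e₀) (G α : ℝ)
    (hG : G = Real.sqrt 3 * e₀ * |lam| / C)
    (hα : α = 1 + |lam| * G / 4 - Real.sqrt (1 + (lam * G / 4) ^ 2))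
    (hsmall : |lam| * G / 4 < 1) :
    ∀ τ : ℝ, τ ≤ G * (1 - α) → ∀ t ∈ Icc (0 : ℝ) τ,
      Real.sqrt (e₀ ^ 2 * Real.exp (lam * t) +
        C ^ 2 / lam ^ 2 *
          (t ^ 2 + 2 * t / lam + 2 / lam ^ 2 * (1 - Real.exp (lam * t)))) ≤ e₀ := by
  intro τ hτ t ht
  obtain ⟨ht0, htτ⟩ := ht
  have hlamne : lam ≠ 0 := ne_of_lt hlam
  have habs : |lam| = -lam := abs_of_neg hlam
  have hμ : 0 < -lam := by linarith
  have hG0 : 0 < G := by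
    rw [hG]
    apply div_pos _ hC
    apply mul_pos (mul_pos (Real.sqrt_pos.mpr (by norm_num)) he₀)
    exact abs_pos.mpr hlamne
  -- key algebraic relation for C
  have hCG : C ^ 2 * G ^ 2 = 3 * e₀ ^ 2 * lam ^ 2 := by
    have h1 : G * C = Real.sqrt 3 * e₀ * |lam| := by
      rw [hG, div_mul_cancel₀ _ (ne_of_gt hC)]
    have h3 : Real.sqrt 3 ^ 2 = 3 := Real.sq_sqrt (by norm_num)
    have h4 : |lam| ^ 2 = lam ^ 2 := sq_abs lam
    calc C ^ 2 * G ^ 2 = (G * C) ^ 2 := by ring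
      _ = (Real.sqrt 3 * e₀ * |lam|) ^ 2 := by rw [h1]
      _ = Real.sqrt 3 ^ 2 * e₀ ^ 2 * |lam| ^ 2 := by ring
      _ = 3 * e₀ ^ 2 * lam ^ 2 := by rw [h3, h4]
  set b := |lam| * G / 4 with hb
  have hb0 : 0 < b := by
    rw [hb]
    positivity
  set s := Real.sqrt (1 + (lam * G / 4) ^ 2) with hs
  have hs2 : s ^ 2 = 1 + b ^ 2 := by
    rw [hs, Real.sq_sqrt (by positivity)]
    rw [hb]
    rw [div_pow, div_pow, mul_pow, mul_pow, sq_abs]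
  have hs0 : 0 ≤ s := Real.sqrt_nonneg _
  -- quadratic bound:  t² + (-lam)·t·G²/2 ≤ G²
  have ht_le : t ≤ G * (s - b) := by
    have : G * (1 - α) = G * (s - b) := by rw [hα]; ring
    linarith [hτ, htτ, this]
  have hsb : b < s := by nlinarith
  have quad : t ^ 2 + (-lam) * t * G ^ 2 / 2 ≤ G ^ 2 := by
    have h1 : t ^ 2 ≤ (G * (s - b)) ^ 2 := by nlinarith
    have h2 : (-lam) * G ^ 2 / 2 = 2 * b * G := by rw [hb, habs]; ring
    have h3 : (-lam) * t * G ^ 2 / 2 ≤ 2 * b * G * (G * (s - b)) := by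
      have := mul_le_mul_of_nonneg_left ht_le (by positivity : (0:ℝ) ≤ 2 * b * G)
      calc (-lam) * t * G ^ 2 / 2 = 2 * b * G * t := by rw [← h2]; ring
        _ ≤ 2 * b * G * (G * (s - b)) := this
    nlinarith [h1, h3, hs2]
  -- exponential bounds with u = -lam * t
  set u := -(lam * t) with hu
  have hu0 : 0 ≤ u := by
    rw [hu]
    have : lam * t ≤ 0 := mul_nonpos_of_nonpos_of_nonneg hlam.le ht0
    linarith
  have hE : Real.exp (lam * t) = Real.exp (-u) := by rw [hu, neg_neg]
  have hB := exp_neg_le_quad u hu0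
  have hC3 := exp_neg_ge_cubic u hu0
  set E := Real.exp (lam * t) with hEdef
  have hEu : E = Real.exp (-u) := hE
  -- t-inequality: u³ ≤ lam²·G²·(u - u²/2)
  have tineq : u ^ 3 ≤ lam ^ 2 * G ^ 2 * (u - u ^ 2 / 2) := by
    have hq := mul_le_mul_of_nonneg_left quad
      (show (0:ℝ) ≤ (-lam) ^ 3 * t by positivity)
    have heq : u ^ 3 - lam ^ 2 * G ^ 2 * (u - u ^ 2 / 2) =
        (-lam) ^ 3 * t * (t ^ 2 + (-lam) * t * G ^ 2 / 2) - (-lam) ^ 3 * t * G ^ 2 := by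
      rw [hu]; ring
    linarith [hq, heq.le, heq.ge]
  -- main polynomial inequality
  have hpoly : C ^ 2 * (u ^ 2 - 2 * u + 2 - 2 * E) ≤ lam ^ 4 * e₀ ^ 2 * (1 - E) := by
    have hf_le : u ^ 2 - 2 * u + 2 - 2 * E ≤ u ^ 3 / 3 := by
      rw [hEu]; linarith [hC3]
    have h1E : u - u ^ 2 / 2 ≤ 1 - E := by rw [hEu]; linarith [hB]
    have step1 : C ^ 2 * (u ^ 2 - 2 * u + 2 - 2 * E) ≤ C ^ 2 * (u ^ 3 / 3) := by
      apply mul_le_mul_of_nonneg_left hf_le (by positivity)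
    have step2 : C ^ 2 * (u ^ 3 / 3) ≤ lam ^ 4 * e₀ ^ 2 * (u - u ^ 2 / 2) := by
      -- C²·u³/3 = (C²G²)·u³/(3G²) = e₀²lam²·u³/G² ≤ e₀²lam²·lam²(u-u²/2)/... 
      have hG2 : (0:ℝ) < G ^ 2 := by positivity
      rw [show C ^ 2 * (u ^ 3 / 3) = (C ^ 2 * G ^ 2) * u ^ 3 / (3 * G ^ 2) from by
        field_simp, hCG]
      rw [div_le_iff₀ (by positivity)]
      have hm := mul_le_mul_of_nonneg_left tineq
        (show (0:ℝ) ≤ 3 * e₀ ^ 2 * lam ^ 2 by positivity)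
      have hr : 3 * e₀ ^ 2 * lam ^ 2 * (lam ^ 2 * G ^ 2 * (u - u ^ 2 / 2)) =
          lam ^ 4 * e₀ ^ 2 * (u - u ^ 2 / 2) * (3 * G ^ 2) := by ring
      linarith [hm, hr.le, hr.ge]
    have step3 : lam ^ 4 * e₀ ^ 2 * (u - u ^ 2 / 2) ≤ lam ^ 4 * e₀ ^ 2 * (1 - E) := by
      apply mul_le_mul_of_nonneg_left h1E (by positivity)
    exact le_trans (le_trans step1 step2) step3
  -- conclude
  have h4 : (0:ℝ) < lam ^ 4 := by positivity
  have key : e₀ ^ 2 * E + C ^ 2 / lam ^ 2 *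
      (t ^ 2 + 2 * t / lam + 2 / lam ^ 2 * (1 - E)) ≤ e₀ ^ 2 := by
    have expand : C ^ 2 / lam ^ 2 * (t ^ 2 + 2 * t / lam + 2 / lam ^ 2 * (1 - E)) =
        C ^ 2 * (u ^ 2 - 2 * u + 2 - 2 * E) / lam ^ 4 := by
      rw [hu]
      field_simp
      ring
    rw [expand]
    have hdiv : C ^ 2 * (u ^ 2 - 2 * u + 2 - 2 * E) / lam ^ 4 ≤ e₀ ^ 2 * (1 - E) := by
      rw [div_le_iff₀ h4]
      nlinarith [hpoly]
    linarith
  calc Real.sqrt (e₀ ^ 2 * E + C ^ 2 / lam ^ 2 *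
        (t ^ 2 + 2 * t / lam + 2 / lam ^ 2 * (1 - E)))
      ≤ Real.sqrt (e₀ ^ 2) := Real.sqrt_le_sqrt key
    _ = e₀ := Real.sqrt_sq he₀.le
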